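/- If f:[0,1]^d → ℝ is given by f(x) = c + λ·ν([0,x]) for a Borel probability measure ν on [0,1]^d, λ ≥ 0, c ∈ ℝ, and P_n = {x_0,…,x_{n-1}} ⊂ [0,1]^d, then the signed error satisfies (1/n)∑_i f(x_i) − ∫_{[0,1]^d} f dx = ∫_{[0,1]^d} λ·δ̄(1−z; P̃_n) dν(z), where P̃_n = {1−x_0,…,1−x_{n-1}} and δ̄(w; Q) = (1/n)·#{i : q_i ∈ [0,w]} − vol([0,w]). -/

import Mathlib

open MeasureTheory

/-- Signed error identity: for `f(x) = c + λ·ν([0,x])` with `ν` a Borel probability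
measure on `[0,1]^d`, the error of the equal-weight rule equals the `ν`-integral of
`λ` times the closed-box local discrepancy of the reflected point set evaluated at
`1 − z`. -/
theorem stmt19 (d n : ℕ) (hn : 0 < n)
    (ν : Measure (Fin d → ℝ)) [IsProbabilityMeasure ν]
    (hνsupp : ν (Set.Icc (0 : Fin d → ℝ) 1)ᶜ = 0)
    (lam c : ℝ) (hlam : 0 ≤ lam)
    (f : (Fin d → ℝ) → ℝ)
    (hf : ∀ x, f x = c + lam * (ν (Set.Icc 0 x)).toReal)
    (x : Fin n → Fin d → ℝ) (hx : ∀ i j, x i j ∈ Set.Icc (0:ℝ) 1) :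
    (1 / n : ℝ) * ∑ i, f (x i) - ∫ y in Set.Icc (0 : Fin d → ℝ) 1, f y =
      ∫ z in Set.Icc (0 : Fin d → ℝ) 1,
        lam * ((Nat.card {i : Fin n // ∀ j, 1 - x i j ≤ 1 - z j} : ℝ) / n
          - ∏ j, (1 - z j)) ∂ν := by
  classical
  set I : Set (Fin d → ℝ) := Set.Icc 0 1 with hIdef
  have hImeas : MeasurableSet I := measurableSet_Icc
  have hae : ∀ᵐ z ∂ν, z ∈ I := by
    rw [MeasureTheory.ae_iff]
    exact hνsupp
  have hνI : ν.restrict I = ν := Measure.restrict_eq_self_of_ae_mem hae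
  have hvolI : volume I = 1 := by simp [hIdef, Real.volume_Icc_pi]
  have hfinvolI : IsFiniteMeasure (volume.restrict I) := by
    constructor
    rw [Measure.restrict_apply_univ, hvolI]
    exact ENNReal.one_lt_top
  -- the set S
  set S : Set ((Fin d → ℝ) × (Fin d → ℝ)) := {p | p.2 ∈ Set.Icc 0 p.1} with hSdef
  have hS : MeasurableSet S := by
    have : S = ⋂ j, ({p : (Fin d → ℝ) × (Fin d → ℝ) | (0:ℝ) ≤ p.2 j} ∩ {p | p.2 j ≤ p.1 j}) := by
      ext p
      simp [hSdef, Set.mem_Icc, Pi.le_def, forall_and, Set.mem_iInter]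
    rw [this]
    have m2 : ∀ j, Measurable fun p : (Fin d → ℝ) × (Fin d → ℝ) => p.2 j :=
      fun j => (measurable_pi_apply j).comp measurable_snd
    have m1 : ∀ j, Measurable fun p : (Fin d → ℝ) × (Fin d → ℝ) => p.1 j :=
      fun j => (measurable_pi_apply j).comp measurable_fst
    exact MeasurableSet.iInter fun j =>
      (measurableSet_le measurable_const (m2 j)).inter (measurableSet_le (m2 j) (m1 j))
  have hpre : ∀ y : Fin d → ℝ, Prod.mk y ⁻¹' S = Set.Icc 0 y := by
    intro y; rfl
  have hg : Measurable fun y => ν (Set.Icc 0 y) := by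
    simpa [hpre] using measurable_measure_prodMk_left (ν := ν) hS
  -- Tonelli
  have h1 : ((volume.restrict I).prod ν) S = ∫⁻ y in I, ν (Set.Icc 0 y) := by
    rw [Measure.prod_apply hS]
    exact lintegral_congr fun y => by rw [hpre]
  have h2 : ((volume.restrict I).prod ν) S
      = ∫⁻ z, (volume.restrict I) ((fun y => (y, z)) ⁻¹' S) ∂ν :=
    Measure.prod_apply_symm hS
  have h3 : ∀ z ∈ I, (volume.restrict I) ((fun y => (y, z)) ⁻¹' S)
      = ∏ j, ENNReal.ofReal (1 - z j) := by
    intro z hz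
    have hz0 : (0 : Fin d → ℝ) ≤ z := hz.1
    have e1 : ((fun y => (y, z)) ⁻¹' S) = Set.Ici z := by
      ext w
      simp only [hSdef, Set.mem_preimage, Set.mem_setOf_eq, Set.mem_Icc, Set.mem_Ici]
      exact ⟨fun h => h.2, fun h => ⟨hz0, h⟩⟩
    rw [e1, Measure.restrict_apply measurableSet_Ici]
    have e2 : Set.Ici z ∩ I = Set.Icc z 1 := by
      ext w
      constructor
      · rintro ⟨h1, _, h3⟩; exact ⟨h1, h3⟩
      · rintro ⟨h1, h2⟩; exact ⟨h1, le_trans hz0 h1, h2⟩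
    rw [e2, Real.volume_Icc_pi]
    rfl
  have hTon : ∫⁻ y in I, ν (Set.Icc 0 y)
      = ∫⁻ z, ∏ j, ENNReal.ofReal (1 - z j) ∂ν := by
    rw [← h1, h2]
    exact lintegral_congr_ae (hae.mono fun z hz => h3 z hz)
  -- convert Tonelli to real integrals
  have hBle : ∀ y : Fin d → ℝ, ν (Set.Icc 0 y) ≤ 1 := fun y => prob_le_one
  have hB1 : ∫ y in I, (ν (Set.Icc 0 y)).toReal
      = (∫⁻ y in I, ν (Set.Icc 0 y)).toReal :=
    integral_toReal hg.aemeasurable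
      (ae_of_all _ fun y => lt_of_le_of_lt (hBle y) ENNReal.one_lt_top)
  have hmeasprod : Measurable fun z : Fin d → ℝ => ∏ j, ENNReal.ofReal (1 - z j) :=
    Finset.measurable_prod _ fun j _ =>
      ENNReal.measurable_ofReal.comp (measurable_const.sub (measurable_pi_apply j))
  have hB2 : ∫ z, (∏ j, ENNReal.ofReal (1 - z j)).toReal ∂ν
      = (∫⁻ z, ∏ j, ENNReal.ofReal (1 - z j) ∂ν).toReal :=
    integral_toReal hmeasprod.aemeasurable
      (ae_of_all _ fun z => ENNReal.prod_lt_top fun j _ => ENNReal.ofReal_lt_top)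
  have hBeq : ∫ y in I, (ν (Set.Icc 0 y)).toReal = ∫ z, ∏ j, (1 - z j) ∂ν := by
    rw [hB1, hTon, ← hB2]
    refine integral_congr_ae (hae.mono fun z hz => ?_)
    simp only [ENNReal.toReal_prod]
    refine Finset.prod_congr rfl fun j _ => ENNReal.toReal_ofReal ?_
    have := hz.2 j
    simp only [Pi.one_apply] at this
    linarith
  -- the indicator form of the point masses
  have hPmeas : ∀ i : Fin n, MeasurableSet {z : Fin d → ℝ | ∀ j, z j ≤ x i j} := by
    intro i
    have : {z : Fin d → ℝ | ∀ j, z j ≤ x i j} = ⋂ j, {z : Fin d → ℝ | z j ≤ x i j} := by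
      ext z; simp [Set.mem_iInter]
    rw [this]
    exact MeasurableSet.iInter fun j => measurableSet_le (measurable_pi_apply j) measurable_const
  have hif : ∀ i : Fin n, (fun z : Fin d → ℝ => if ∀ j, z j ≤ x i j then (1:ℝ) else 0)
      = Set.indicator {z : Fin d → ℝ | ∀ j, z j ≤ x i j} (fun _ => 1) := by
    intro i; ext z; simp [Set.indicator_apply, Set.mem_setOf_eq]
  have hcount : ∀ i : Fin n, (ν (Set.Icc 0 (x i))).toReal
      = ∫ z, (if ∀ j, z j ≤ x i j then (1:ℝ) else 0) ∂ν := by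
    intro i
    have hνeq : ν (Set.Icc 0 (x i)) = ν {z | ∀ j, z j ≤ x i j} := by
      apply measure_congr
      refine Filter.eventuallyEq_set.2 (hae.mono fun z hz => ?_)
      simp only [Set.mem_Icc, Set.mem_setOf_eq, Pi.le_def]
      exact ⟨fun h j => h.2 j, fun h => ⟨hz.1, h⟩⟩
    rw [hνeq, hif i]
    exact (MeasureTheory.integral_indicator_one (hPmeas i)).symm
  have hcard : ∀ z : Fin d → ℝ,
      ((Nat.card {i : Fin n // ∀ j, 1 - x i j ≤ 1 - z j} : ℕ) : ℝ)
        = ∑ i, (if ∀ j, z j ≤ x i j then (1:ℝ) else 0) := by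
    intro z
    have hiff : ∀ i : Fin n, (∀ j, 1 - x i j ≤ 1 - z j) ↔ (∀ j, z j ≤ x i j) := by
      intro i
      constructor <;> intro h j <;> have := h j <;> linarith
    rw [Nat.card_congr (Equiv.subtypeEquivRight hiff), Nat.card_eq_fintype_card,
      Fintype.card_subtype]
    rw [Finset.sum_boole]
  -- integrability over ν
  have hintifs : ∀ i : Fin n,
      Integrable (fun z : Fin d → ℝ => if ∀ j, z j ≤ x i j then (1:ℝ) else 0) ν := by
    intro i
    rw [hif i]
    exact (integrable_const (1:ℝ)).indicator (hPmeas i)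
  have hintcount : Integrable
      (fun z : Fin d → ℝ => ∑ i, (if ∀ j, z j ≤ x i j then (1:ℝ) else 0)) ν :=
    integrable_finset_sum _ fun i _ => hintifs i
  have hintprod : Integrable (fun z : Fin d → ℝ => ∏ j, (1 - z j)) ν := by
    refine Integrable.mono' (integrable_const 1)
      (Finset.measurable_prod _ fun j _ =>
        measurable_const.sub (measurable_pi_apply j)).aestronglyMeasurable ?_
    refine hae.mono fun z hz => ?_
    rw [Real.norm_eq_abs, Finset.abs_prod]
    refine Finset.prod_le_one (fun j _ => abs_nonneg _) fun j _ => ?_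
    have h2 := hz.2 j
    have h1 := hz.1 j
    simp only [Pi.one_apply] at h2
    simp only [Pi.zero_apply] at h1
    rw [abs_of_nonneg (by linarith)]
    linarith
  -- the sum on the left
  have hsum : ∑ i, f (x i) = n * c + lam * ∑ i, (ν (Set.Icc 0 (x i))).toReal := by
    simp only [hf]
    rw [Finset.sum_add_distrib, Finset.sum_const, Finset.card_univ, Fintype.card_fin,
      ← Finset.mul_sum, nsmul_eq_mul]
  -- the integral of f
  have hInt : Integrable (fun y => (ν (Set.Icc 0 y)).toReal) (volume.restrict I) := by
    refine Integrable.mono' (integrable_const 1) hg.ennreal_toReal.aestronglyMeasurable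
      (ae_of_all _ fun y => ?_)
    rw [Real.norm_eq_abs, abs_of_nonneg ENNReal.toReal_nonneg]
    have := ENNReal.toReal_mono ENNReal.one_ne_top (hBle y)
    simpa using this
  have hfint : ∫ y in I, f y = c + lam * ∫ y in I, (ν (Set.Icc 0 y)).toReal := by
    calc ∫ y in I, f y = ∫ y in I, (c + lam * (ν (Set.Icc 0 y)).toReal) :=
          integral_congr_ae (ae_of_all _ fun y => hf y)
      _ = c + lam * ∫ y in I, (ν (Set.Icc 0 y)).toReal := by
          rw [integral_add (integrable_const c) (hInt.const_mul lam), integral_const,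
            integral_const_mul]
          simp [Measure.restrict_apply_univ, hvolI, measureReal_def]
  -- rewrite the RHS
  have hRHS : ∫ z in I,
        lam * ((Nat.card {i : Fin n // ∀ j, 1 - x i j ≤ 1 - z j} : ℝ) / n
          - ∏ j, (1 - z j)) ∂ν
      = lam * ((∑ i, (ν (Set.Icc 0 (x i))).toReal) / n - ∫ z, ∏ j, (1 - z j) ∂ν) := by
    rw [hνI]
    have : ∀ z : Fin d → ℝ,
        lam * ((Nat.card {i : Fin n // ∀ j, 1 - x i j ≤ 1 - z j} : ℝ) / n
          - ∏ j, (1 - z j))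
        = lam * ((∑ i, (if ∀ j, z j ≤ x i j then (1:ℝ) else 0)) / n - ∏ j, (1 - z j)) := by
      intro z; rw [hcard z]
    rw [integral_congr_ae (ae_of_all _ this), integral_const_mul,
      integral_sub (hintcount.div_const _) hintprod, integral_div,
      integral_finset_sum _ fun i _ => hintifs i]
    congr 3
    exact Finset.sum_congr rfl fun i _ => (hcount i).symm
  rw [hRHS, hsum, hfint, ← hBeq]
  have hn' : (n : ℝ) ≠ 0 := Nat.cast_ne_zero.2 hn.ne'
  field_simp
  ring
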